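/- The Ehrhart polynomial of the edge polytope of an odd cycle C_{2n−1} is i(m) = C(m + 2n − 2, 2n − 2). -/

import Mathlib

open Pointwise
open scoped Classical

/-- The set of vertices of the edge polytope: for each edge {i,j}, the 0/1 indicator
vector of {i,j}. The edge polytope is their convex hull. -/
noncomputable def edgePolytope {V : Type*} [Fintype V] (G : SimpleGraph V) : Set (V → ℝ) :=
  convexHull ℝ {x | ∃ i j, G.Adj i j ∧ x = fun k => if k = i ∨ k = j then (1 : ℝ) else 0}

/-- Number of lattice points in the `m`-th dilate of the edge polytope. -/
noncomputable def ehrhartCount {V : Type*} [Fintype V] (G : SimpleGraph V) (m : ℕ) : ℕ :=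
  Nat.card {x : V → ℤ // (fun v => (x v : ℝ)) ∈ (m : ℝ) • edgePolytope G}

/-- The Ehrhart series of the edge polytope of `G`. -/
noncomputable def ehrhartSeries {V : Type*} [Fintype V] (G : SimpleGraph V) : PowerSeries ℚ :=
  PowerSeries.mk fun m => (ehrhartCount G m : ℚ)

section Aux

open Fin.NatCast

instance aux_neZero (N : ℕ) : NeZero (2 * N + 3) := ⟨by omega⟩

/-- The vertex of the edge polytope corresponding to edge `{i, i+1}`. -/
noncomputable def vtx (N : ℕ) (i : Fin (2 * N + 3)) : Fin (2 * N + 3) → ℝ :=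
  fun k => if k = i ∨ k = i + 1 then (1 : ℝ) else 0

lemma aux_val_one (N : ℕ) : ((1 : Fin (2 * N + 3)) : ℕ) = 1 := by
  rw [Fin.val_one']
  exact Nat.mod_eq_of_lt (by omega)

lemma aux_one_ne_zero (N : ℕ) : (1 : Fin (2 * N + 3)) ≠ 0 := by
  intro h
  have h1 := aux_val_one N
  rw [h] at h1
  simp at h1

lemma aux_ite_congr {α : Sort*} {c d : Prop} {i1 : Decidable c} {i2 : Decidable d}
    (h : c ↔ d) (a b : α) : @ite α c i1 a b = @ite α d i2 a b := by
  by_cases hc : c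
  · rw [if_pos hc, if_pos (h.mp hc)]
  · rw [if_neg hc, if_neg fun hd => hc (h.mpr hd)]

lemma edgePolytope_cycle (N : ℕ) :
    edgePolytope (SimpleGraph.cycleGraph (2 * N + 3)) = convexHull ℝ (Set.range (vtx N)) := by
  have h1 : ((1 : Fin (2 * N + 3)) : ℕ) = 1 := aux_val_one N
  rw [edgePolytope]
  congr 1
  ext x
  simp only [Set.mem_setOf_eq, Set.mem_range]
  constructor
  · rintro ⟨i, j, hadj, rfl⟩
    rw [SimpleGraph.cycleGraph_adj'] at hadj
    rcases hadj with h | h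
    · have hij : i = j + 1 := by
        have h2 : i - j = 1 := Fin.ext (by rw [h, h1])
        rw [sub_eq_iff_eq_add] at h2
        exact h2.trans (add_comm 1 j)
      subst hij
      exact ⟨j, (funext fun k => aux_ite_congr or_comm (1 : ℝ) 0 : vtx N j = _)⟩
    · have hij : j = i + 1 := by
        have h2 : j - i = 1 := Fin.ext (by rw [h, h1])
        rw [sub_eq_iff_eq_add] at h2
        exact h2.trans (add_comm 1 i)
      subst hij
      exact ⟨i, (funext fun k => aux_ite_congr Iff.rfl (1 : ℝ) 0 : vtx N i = _)⟩
  · rintro ⟨i, rfl⟩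
    refine ⟨i, i + 1, ?_, (funext fun k => aux_ite_congr Iff.rfl (1 : ℝ) 0 : _ = vtx N i).symm⟩
    rw [SimpleGraph.cycleGraph_adj']
    right
    rw [add_sub_cancel_left, h1]

lemma coord (N : ℕ) (w : Fin (2 * N + 3) → ℝ) (k : Fin (2 * N + 3)) :
    (∑ i, w i • vtx N i) k = w k + w (k - 1) := by
  have hne : k ≠ k - 1 := by
    intro h
    exact aux_one_ne_zero N (sub_eq_self.mp h.symm)
  have hterm : ∀ i : Fin (2 * N + 3),
      (w i • vtx N i) k = if i ∈ ({k, k - 1} : Finset (Fin (2 * N + 3))) then w i else 0 := by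
    intro i
    have hcond : (k = i ∨ k = i + 1) ↔ (i = k ∨ i = k - 1) := by
      apply or_congr eq_comm
      rw [eq_sub_iff_add_eq]
      exact eq_comm
    simp only [Pi.smul_apply, vtx, smul_eq_mul, Finset.mem_insert, Finset.mem_singleton]
    rw [mul_ite, mul_one, mul_zero, if_congr hcond rfl rfl]
  calc (∑ i, w i • vtx N i) k = ∑ i, (w i • vtx N i) k := Finset.sum_apply k Finset.univ _
    _ = ∑ i, if i ∈ ({k, k - 1} : Finset (Fin (2 * N + 3))) then w i else 0 :=
        Finset.sum_congr rfl fun i _ => hterm i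
    _ = ∑ i ∈ ({k, k - 1} : Finset (Fin (2 * N + 3))), w i := by
        rw [Finset.sum_ite_mem, Finset.univ_inter]
    _ = w k + w (k - 1) := Finset.sum_pair hne

lemma mem_dilate_iff (N : ℕ) (c : ℝ) (hc : 0 ≤ c) (x : Fin (2 * N + 3) → ℝ) :
    x ∈ c • edgePolytope (SimpleGraph.cycleGraph (2 * N + 3)) ↔
      ∃ w : Fin (2 * N + 3) → ℝ, (∀ i, 0 ≤ w i) ∧ ∑ i, w i = c ∧ x = ∑ i, w i • vtx N i := by
  rw [edgePolytope_cycle N]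
  rcases hc.lt_or_eq with hc' | rfl
  · rw [← convexHull_smul, Set.smul_set_range, convexHull_range_eq_exists_affineCombination]
    simp only [Set.mem_setOf_eq]
    constructor
    · rintro ⟨s, u, hu0, hu1, rfl⟩
      refine ⟨fun i => if i ∈ s then c * u i else 0, fun i => ?_, ?_, ?_⟩
      · dsimp only
        by_cases his : i ∈ s
        · rw [if_pos his]; exact mul_nonneg hc'.le (hu0 _ his)
        · rw [if_neg his]
      · rw [Finset.sum_ite_mem, Finset.univ_inter, ← Finset.mul_sum, hu1, mul_one]
      · rw [Finset.affineCombination_eq_linear_combination _ _ _ hu1]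
        calc ∑ i ∈ s, u i • c • vtx N i
            = ∑ i ∈ s, (c * u i) • vtx N i := by
              refine Finset.sum_congr rfl fun i _ => ?_
              rw [smul_smul, mul_comm (u i) c]
          _ = ∑ i, (if i ∈ s then (c * u i) • vtx N i else 0) := by
              rw [Finset.sum_ite_mem, Finset.univ_inter]
          _ = ∑ i, (if i ∈ s then c * u i else 0) • vtx N i := by
              refine Finset.sum_congr rfl fun i _ => ?_
              rw [ite_smul, zero_smul]
    · rintro ⟨w, hw0, hw1, rfl⟩
      have hsum1 : ∑ i, c⁻¹ * w i = 1 := by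
        rw [← Finset.mul_sum, hw1, inv_mul_cancel₀ hc'.ne']
      refine ⟨Finset.univ, fun i => c⁻¹ * w i,
        fun i _ => mul_nonneg (inv_nonneg.2 hc'.le) (hw0 i), hsum1, ?_⟩
      rw [Finset.affineCombination_eq_linear_combination _ _ _ hsum1]
      refine Finset.sum_congr rfl fun i _ => ?_
      rw [smul_smul]
      congr 1
      rw [mul_comm c⁻¹, mul_assoc, inv_mul_cancel₀ hc'.ne', mul_one]
  · have hne : (Set.range (vtx N)).Nonempty := ⟨vtx N 0, 0, rfl⟩
    rw [Set.zero_smul_set (hne.mono (subset_convexHull ℝ _))]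
    constructor
    · intro hx
      have hx0 : x = 0 := hx
      refine ⟨fun _ => 0, fun _ => le_refl 0, by simp, ?_⟩
      rw [hx0]
      exact (Finset.sum_eq_zero fun i _ => by rw [zero_smul]).symm
    · rintro ⟨w, hw0, hw1, rfl⟩
      have hz : ∀ i ∈ Finset.univ, w i = 0 :=
        (Finset.sum_eq_zero_iff_of_nonneg fun i _ => hw0 i).mp hw1
      have : (∑ i, w i • vtx N i) = 0 :=
        Finset.sum_eq_zero fun i hi => by rw [hz i hi, zero_smul]
      rw [this]
      exact Set.mem_zero.mpr rfl

lemma card_compositions (k m : ℕ) :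
    Nat.card {y : Fin k → ℕ // ∑ i, y i = m} = Nat.multichoose k m := by
  have e : {y : Fin k → ℕ // ∑ i, y i = m} ≃ Sym (Fin k) m :=
    { toFun := fun y => ⟨∑ i, (y.1 i) • ({i} : Multiset (Fin k)), by
        rw [Multiset.card_sum]
        simp only [Multiset.card_nsmul, Multiset.card_singleton, mul_one]
        exact y.2⟩
      invFun := fun s => ⟨fun i => s.1.count i, by
        show ∑ i : Fin k, s.1.count i = m
        have hcs : ∑ i : Fin k, s.1.count i = Multiset.card s.1 := by
          rw [← Multiset.toFinset_sum_count_eq s.1]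
          exact (Finset.sum_subset (Finset.subset_univ _) fun i _ hi =>
            Multiset.count_eq_zero.2 fun h' => hi (Multiset.mem_toFinset.2 h')).symm
        exact hcs.trans s.2⟩
      left_inv := fun y => by
        apply Subtype.ext
        funext i
        simp [Multiset.count_sum', Multiset.count_nsmul, Multiset.count_singleton, eq_comm]
      right_inv := fun s => by
        apply Subtype.ext
        show ∑ i, s.1.count i • ({i} : Multiset (Fin k)) = s.1
        conv_rhs => rw [← Multiset.toFinset_sum_count_nsmul_eq s.1]
        exact (Finset.sum_subset (Finset.subset_univ _) fun i _ hi => by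
          rw [Multiset.count_eq_zero.2 fun h' => hi (Multiset.mem_toFinset.2 h'), zero_smul]).symm }
  rw [Nat.card_congr e, Nat.card_eq_fintype_card, Sym.card_sym_eq_multichoose, Fintype.card_fin]

/-- The bijection from compositions of `m` to lattice points of the `m`-th dilate. -/
noncomputable def Psi (N m : ℕ) (y : {y : Fin (2 * N + 3) → ℕ // ∑ i, y i = m}) :
    {x : Fin (2 * N + 3) → ℤ //
      (fun v => (x v : ℝ)) ∈ (m : ℝ) • edgePolytope (SimpleGraph.cycleGraph (2 * N + 3))} :=
  ⟨fun k => (y.1 k : ℤ) + (y.1 (k - 1) : ℤ), by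
    rw [mem_dilate_iff N (m : ℝ) (by positivity)]
    refine ⟨fun i => (y.1 i : ℝ), fun i => by positivity, ?_, ?_⟩
    · have := y.2
      beta_reduce
      exact_mod_cast congrArg (Nat.cast : ℕ → ℝ) this
    · funext k
      rw [coord]
      push_cast
      ring⟩

lemma Psi_injective (N m : ℕ) : Function.Injective (Psi N m) := by
  intro y y' h
  have h' : ∀ k, (y.1 k : ℤ) + (y.1 (k - 1) : ℤ) = (y'.1 k : ℤ) + (y'.1 (k - 1) : ℤ) :=
    fun k => congrFun (congrArg Subtype.val h) k
  set g : Fin (2 * N + 3) → ℤ := fun k => (y.1 k : ℤ) - (y'.1 k : ℤ) with hg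
  have hrec : ∀ k, g k = - g (k - 1) := by
    intro k
    have := h' k
    simp only [hg]
    omega
  have hj : ∀ j : ℕ, g (j : Fin (2 * N + 3)) = (-1) ^ j * g 0 := by
    intro j
    induction j with
    | zero => simp
    | succ j ih =>
      have e1 : ((j + 1 : ℕ) : Fin (2 * N + 3)) = (j : Fin (2 * N + 3)) + 1 := by push_cast; ring
      rw [e1, hrec ((j : Fin (2 * N + 3)) + 1), add_sub_cancel_right, ih]
      ring
  have h0 : g 0 = 0 := by
    have hd := hj (2 * N + 3)
    rw [Fin.natCast_self, Odd.neg_one_pow ⟨N + 1, by ring⟩] at hd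
    omega
  have hzero : ∀ k, g k = 0 := by
    intro k
    have := hj k.val
    rwa [Fin.cast_val_eq_self, h0, mul_zero] at this
  apply Subtype.ext
  funext k
  have := hzero k
  simp only [hg, sub_eq_zero] at this
  exact_mod_cast this

lemma Psi_surjective (N m : ℕ) : Function.Surjective (Psi N m) := by
  intro x
  obtain ⟨w, hw0, hwsum, hx⟩ := (mem_dilate_iff N (m : ℝ) (by positivity) _).mp x.2
  have hcoord : ∀ k, ((x.1 k : ℝ)) = w k + w (k - 1) := by
    intro k
    have := congrFun hx k
    rwa [coord] at this
  -- step differences by 2 are integers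
  have hstep : ∀ (k : Fin (2 * N + 3)) (j : ℕ), ∃ z : ℤ, w (k + ((2 * j : ℕ) : Fin (2 * N + 3))) = w k + z := by
    intro k j
    induction j with
    | zero => exact ⟨0, by simp⟩
    | succ j ih =>
      obtain ⟨z, hz⟩ := ih
      set a := k + ((2 * j : ℕ) : Fin (2 * N + 3)) with ha
      have r1 : (x.1 (a + 1) : ℝ) = w (a + 1) + w a := by
        rw [hcoord (a + 1), add_sub_cancel_right]
      have r2 : (x.1 (a + 1 + 1) : ℝ) = w (a + 1 + 1) + w (a + 1) := by
        rw [hcoord (a + 1 + 1), add_sub_cancel_right]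
      refine ⟨z + (x.1 (a + 1 + 1) - x.1 (a + 1)), ?_⟩
      have e1 : k + ((2 * (j + 1) : ℕ) : Fin (2 * N + 3)) = a + 1 + 1 := by
        rw [ha]
        rw [show 2 * (j + 1) = 2 * j + 1 + 1 by ring, Nat.cast_add, Nat.cast_add, Nat.cast_one]
        rw [← add_assoc, ← add_assoc]
      rw [e1]
      push_cast
      push_cast at r1 r2
      linarith
  have hone : ∀ k : Fin (2 * N + 3), ∃ z : ℤ, w (k + 1) = w k + z := by
    intro k
    obtain ⟨z, hz⟩ := hstep k (N + 2)
    have e1 : ((2 * (N + 2) : ℕ) : Fin (2 * N + 3)) = 1 := by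
      have e2 : (2 * (N + 2) : ℕ) = (2 * N + 3) + 1 := by ring
      rw [e2, Nat.cast_add, Fin.natCast_self, Nat.cast_one, zero_add]
    rw [e1] at hz
    exact ⟨z, hz⟩
  have h2w : ∀ k, ∃ c : ℤ, 2 * w k = (c : ℝ) := by
    intro k
    obtain ⟨z, hz⟩ := hone k
    have h3 := hcoord (k + 1)
    rw [add_sub_cancel_right] at h3
    refine ⟨x.1 (k + 1) - z, ?_⟩
    push_cast
    linarith
  choose c hc using h2w
  have hpar : ∀ k, c k + c (k + 1) = 2 * x.1 (k + 1) := by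
    intro k
    have h1 := hc k
    have h2 := hc (k + 1)
    have h3 := hcoord (k + 1)
    rw [add_sub_cancel_right] at h3
    have : ((c k + c (k + 1) : ℤ) : ℝ) = ((2 * x.1 (k + 1) : ℤ) : ℝ) := by
      push_cast
      linarith
    exact_mod_cast this
  have heven : ∀ j : ℕ, Even (c (j : Fin (2 * N + 3)) - c 0) := by
    intro j
    induction j with
    | zero => simp
    | succ j ih =>
      obtain ⟨r, hr⟩ := ih
      have e1 : ((j + 1 : ℕ) : Fin (2 * N + 3)) = (j : Fin (2 * N + 3)) + 1 := by push_cast; ring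
      rw [e1]
      have hp := hpar (j : Fin (2 * N + 3))
      exact ⟨x.1 ((j : Fin (2 * N + 3)) + 1) - c (j : Fin (2 * N + 3)) + r, by omega⟩
  have hevenk : ∀ k, Even (c k - c 0) := by
    intro k
    have := heven k.val
    rwa [Fin.cast_val_eq_self] at this
  have hsum : ∑ k, c k = 2 * m := by
    have : ((∑ k, c k : ℤ) : ℝ) = ((2 * m : ℤ) : ℝ) := by
      push_cast
      calc ∑ k, (c k : ℝ) = ∑ k, 2 * w k := Finset.sum_congr rfl fun k _ => (hc k).symm
        _ = 2 * ∑ k, w k := by rw [Finset.mul_sum]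
        _ = 2 * m := by rw [hwsum]
    exact_mod_cast this
  have hc0even : Even (c 0) := by
    choose r hr using hevenk
    have hsum2 : ∑ k, (c k - c 0) = 2 * m - (2 * N + 3) * c 0 := by
      rw [Finset.sum_sub_distrib, hsum, Finset.sum_const, Finset.card_univ, Fintype.card_fin]
      ring
    have hsum3 : ∑ k, (c k - c 0) = 2 * ∑ k, r k := by
      rw [Finset.mul_sum]
      exact Finset.sum_congr rfl fun k _ => by rw [hr k]; ring
    have hmul : (2 * N + 3 : ℤ) * c 0 = 2 * ((m : ℤ) - ∑ k, r k) := by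
      rw [hsum2] at hsum3
      linarith
    have hev : Even ((2 * N + 3 : ℤ) * c 0) := ⟨(m : ℤ) - ∑ k, r k, by linarith⟩
    rcases Int.even_mul.mp hev with h | h
    · exfalso
      rw [Int.even_iff] at h
      omega
    · exact h
  have hck : ∀ k, Even (c k) := by
    intro k
    obtain ⟨r, hr⟩ := hevenk k
    obtain ⟨s, hs⟩ := hc0even
    exact ⟨r + s, by omega⟩
  choose e he using hck
  have hwe : ∀ k, w k = (e k : ℝ) := by
    intro k
    have h1 := hc k
    rw [he k] at h1
    push_cast at h1
    linarith
  have he0 : ∀ k, 0 ≤ e k := by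
    intro k
    have := hw0 k
    rw [hwe k] at this
    exact_mod_cast this
  refine ⟨⟨fun k => (e k).toNat, ?_⟩, ?_⟩
  · have : ((∑ k, (e k).toNat : ℕ) : ℝ) = (m : ℝ) := by
      push_cast
      calc ∑ k, ((e k).toNat : ℝ) = ∑ k, w k := by
            refine Finset.sum_congr rfl fun k _ => ?_
            rw [hwe k]
            have h4 := Int.toNat_of_nonneg (he0 k)
            exact_mod_cast congrArg (Int.cast : ℤ → ℝ) h4
        _ = m := hwsum
    exact_mod_cast this
  · apply Subtype.ext
    funext k
    show ((e k).toNat : ℤ) + ((e (k - 1)).toNat : ℤ) = x.1 k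
    rw [Int.toNat_of_nonneg (he0 k), Int.toNat_of_nonneg (he0 (k - 1))]
    have : ((e k + e (k - 1) : ℤ) : ℝ) = ((x.1 k : ℤ) : ℝ) := by
      push_cast
      rw [← hwe, ← hwe]
      linarith [hcoord k]
    exact_mod_cast this

end Aux

/-- The Ehrhart polynomial of the edge polytope of an odd cycle `C_{2n-1}` is
`i(m) = C(m + 2n - 2, 2n - 2)`. -/
theorem ehrhartPolynomial_odd_cycle (n : ℕ) (hn : 2 ≤ n) (m : ℕ) :
    ehrhartCount (SimpleGraph.cycleGraph (2 * n - 1)) m = (m + (2 * n - 2)).choose (2 * n - 2) := by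
  obtain ⟨N, rfl⟩ : ∃ N, n = N + 2 := ⟨n - 2, by omega⟩
  have hd : 2 * (N + 2) - 1 = 2 * N + 3 := by omega
  have hD : 2 * (N + 2) - 2 = 2 * N + 2 := by omega
  rw [hd, hD, ehrhartCount,
    Nat.card_congr (Equiv.ofBijective (Psi N m) ⟨Psi_injective N m, Psi_surjective N m⟩).symm,
    card_compositions, Nat.multichoose_eq]
  have h1 : 2 * N + 3 + m - 1 = m + (2 * N + 2) := by omega
  rw [h1]
  rw [← Nat.choose_symm (Nat.le_add_right m (2 * N + 2)), Nat.add_sub_cancel_left]
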